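/- Let Q and Q′ be normal coordinates for germs at 0 of real-analytic hypersurfaces M, M′ ⊂ ℂ², and let H = (F,G) : (ℂ²,0) → (ℂ²,0) be a holomorphic map satisfying the mapping identity for (Q,Q′). Then for all χ ∈ ℂ near 0, conj(∂_wG(conj χ, 0)) = ∂_wG(0,0) − q′_{10}(F̄(χ,0)) · ∂_wF(0,0), where q′_{10}(χ′) := ∂_{z′}Q′(0,χ′,0) and F̄(χ,τ) := conj(F(conj χ, conj τ)). In particular, taking χ = 0 and using q′_{10}(0) = 0, the derivative ∂_wG(0,0) is a real number. -/

import Mathlib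

open Filter Topology Matrix

noncomputable section

/-- Complex conjugation as a plain function. -/
def cj : ℂ → ℂ := (starRingEnd ℂ)

/-- Iterated partial derivative `∂_z^i ∂_w^j F (z, w)` of `F : ℂ → ℂ → ℂ`. -/
def pd (F : ℂ → ℂ → ℂ) (i j : ℕ) (z w : ℂ) : ℂ :=
  deriv^[i] (fun z' => deriv^[j] (F z') w) z

/-- `Q` is a normal-coordinates defining function (near `0`) of a germ of a
real-analytic hypersurface in `ℂ²`. -/
def IsNormalCoord (Q : ℂ → ℂ → ℂ → ℂ) : Prop :=
  AnalyticAt ℂ (fun p : ℂ × ℂ × ℂ => Q p.1 p.2.1 p.2.2) 0 ∧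
  (∀ᶠ p : ℂ × ℂ in 𝓝 0, Q p.1 0 p.2 = p.2) ∧
  (∀ᶠ p : ℂ × ℂ in 𝓝 0, Q 0 p.1 p.2 = p.2) ∧
  (∀ᶠ p : ℂ × ℂ × ℂ in 𝓝 0, Q p.1 p.2.1 (cj (Q (cj p.2.1) (cj p.1) (cj p.2.2))) = p.2.2)

/-- The mapping identity expressing that the germ at `0` of the holomorphic map
`H = (F, G)` (with `H(0) = 0`) sends the hypersurface defined by `Q` into the one
defined by `Q'`. -/
def SendsInto (Q Q' : ℂ → ℂ → ℂ → ℂ) (F G : ℂ → ℂ → ℂ) : Prop :=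
  AnalyticAt ℂ (fun p : ℂ × ℂ => F p.1 p.2) 0 ∧
  AnalyticAt ℂ (fun p : ℂ × ℂ => G p.1 p.2) 0 ∧
  F 0 0 = 0 ∧ G 0 0 = 0 ∧
  ∀ᶠ p : ℂ × ℂ × ℂ in 𝓝 0,
    G p.1 (Q p.1 p.2.1 p.2.2) =
      Q' (F p.1 (Q p.1 p.2.1 p.2.2)) (cj (F (cj p.2.1) (cj p.2.2))) (cj (G (cj p.2.1) (cj p.2.2)))

/-- Determinant of the Jacobian matrix of `H = (F, G)` at `0`. -/
def JacDet (F G : ℂ → ℂ → ℂ) : ℂ :=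
  pd F 1 0 0 0 * pd G 0 1 0 0 - pd F 0 1 0 0 * pd G 1 0 0 0

/-- The hypersurface defined by `Q` is not Levi-flat near `0`, i.e. `Q(z,χ,τ) ≢ τ`. -/
def NotLeviFlat (Q : ℂ → ℂ → ℂ → ℂ) : Prop :=
  ¬ ∀ᶠ p : ℂ × ℂ × ℂ in 𝓝 0, Q p.1 p.2.1 p.2.2 = p.2.2

/-- The hypersurface defined by `Q` is of finite type at `0`, i.e. `Q(z,χ,0) ≢ 0`. -/
def FiniteTypeAt (Q : ℂ → ℂ → ℂ → ℂ) : Prop :=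
  ¬ ∀ᶠ p : ℂ × ℂ in 𝓝 0, Q p.1 p.2 0 = 0

/-- `q_{αμ}(χ) = ∂_z^α ∂_τ^μ Q(0, χ, 0)`. -/
def qd (Q : ℂ → ℂ → ℂ → ℂ) (α μ : ℕ) (χ : ℂ) : ℂ :=
  deriv^[α] (fun z => deriv^[μ] (fun τ => Q z χ τ) 0) 0

/-- The hypersurface (germ) defined by `Q` as a subset of `ℂ²`. -/
def MSet (Q : ℂ → ℂ → ℂ → ℂ) : Set (ℂ × ℂ) := {p | p.2 = Q p.1 (cj p.1) (cj p.2)}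

/- ### Auxiliary lemmas -/

lemma cj_cj (z : ℂ) : cj (cj z) = z := Complex.conj_conj z

lemma cj_zero : cj 0 = 0 := map_zero _

lemma continuous_cj : Continuous cj := Complex.continuous_conj

lemma tendsto_cj_punct (x : ℂ) : Tendsto cj (𝓝[≠] (cj x)) (𝓝[≠] x) := by
  rw [tendsto_nhdsWithin_iff]
  constructor
  · have h1 : Tendsto cj (𝓝[≠] (cj x)) (𝓝 (cj (cj x))) :=
      (continuous_cj.tendsto (cj x)).mono_left nhdsWithin_le_nhds
    rwa [cj_cj] at h1
  · filter_upwards [self_mem_nhdsWithin] with y hy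
    intro hxy
    simp only [Set.mem_singleton_iff] at hxy
    simp only [Set.mem_compl_iff, Set.mem_singleton_iff] at hy
    exact hy (by rw [← cj_cj y, hxy])

lemma hasDerivAt_cj_comp {f : ℂ → ℂ} {c x : ℂ} (hf : HasDerivAt f c x) :
    HasDerivAt (fun τ => cj (f (cj τ))) (cj c) (cj x) := by
  rw [hasDerivAt_iff_tendsto_slope] at hf ⊢
  have key : ∀ τ, slope (fun τ => cj (f (cj τ))) (cj x) τ = cj (slope f x (cj τ)) := by
    intro τ
    rw [slope_def_field, slope_def_field, cj_cj]
    simp only [cj, map_div₀, map_sub, Complex.conj_conj]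
  rw [show slope (fun τ => cj (f (cj τ))) (cj x) = fun τ => cj (slope f x (cj τ)) from funext key]
  exact (continuous_cj.tendsto c).comp (hf.comp (tendsto_cj_punct x))

lemma pd01 (G : ℂ → ℂ → ℂ) : pd G 0 1 0 0 = deriv (fun w => G 0 w) 0 := by
  simp [pd]

lemma qd10 (Q : ℂ → ℂ → ℂ → ℂ) (χ : ℂ) : qd Q 1 0 χ = deriv (fun z => Q z χ 0) 0 := by
  simp [qd]

/-- identity (16): for a holomorphic map `H = (F, G)` satisfying the
mapping identity, `conj(∂_w G(conj χ, 0)) = ∂_w G(0) − q'₁₀(F̄(χ,0)) · ∂_w F(0)` for `χ`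
near `0`, where `q'₁₀(χ') = ∂_{z'} Q'(0, χ', 0)`; in particular `∂_w G(0)` is real. -/
theorem Gw_along_segre_identity
    (Q Q' : ℂ → ℂ → ℂ → ℂ) (hQ : IsNormalCoord Q) (hQ' : IsNormalCoord Q')
    (F G : ℂ → ℂ → ℂ) (h : SendsInto Q Q' F G) :
    (∀ᶠ χ : ℂ in 𝓝 0,
      cj (deriv (fun w => G (cj χ) w) 0) =
        pd G 0 1 0 0 - qd Q' 1 0 (cj (F (cj χ) 0)) * pd F 0 1 0 0) ∧
    (pd G 0 1 0 0).im = 0 := by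
  obtain ⟨hQ'an, hn1', hn2', -⟩ := hQ'
  obtain ⟨hQan, -, hn2, -⟩ := hQ
  obtain ⟨hF, hG, hF0, hG0, hmap⟩ := h
  -- differentiability on neighborhoods
  have hQ'd : ∀ᶠ p : ℂ × ℂ × ℂ in 𝓝 0,
      DifferentiableAt ℂ (fun p : ℂ × ℂ × ℂ => Q' p.1 p.2.1 p.2.2) p :=
    hQ'an.eventually_analyticAt.mono fun p hp => hp.differentiableAt
  have hGd : ∀ᶠ p : ℂ × ℂ in 𝓝 0, DifferentiableAt ℂ (fun q : ℂ × ℂ => G q.1 q.2) p :=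
    hG.eventually_analyticAt.mono fun p hp => hp.differentiableAt
  have hFd : ∀ᶠ p : ℂ × ℂ in 𝓝 0, DifferentiableAt ℂ (fun q : ℂ × ℂ => F q.1 q.2) p :=
    hF.eventually_analyticAt.mono fun p hp => hp.differentiableAt
  -- extract open sets
  obtain ⟨W, hW, hWo, hW0⟩ := eventually_nhds_iff.1 hmap
  obtain ⟨U, hU, hUo, hU0⟩ := eventually_nhds_iff.1 hn2
  obtain ⟨V, hV, hVo, hV0⟩ := eventually_nhds_iff.1 hn2'
  obtain ⟨D, hD, hDo, hD0⟩ := eventually_nhds_iff.1 hQ'd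
  obtain ⟨DG, hDG, hDGo, hDG0⟩ := eventually_nhds_iff.1 hGd
  obtain ⟨DF, hDF, hDFo, hDF0⟩ := eventually_nhds_iff.1 hFd
  -- basic continuity facts
  have tF : Tendsto (fun χ : ℂ => F (cj χ) 0) (𝓝 0) (𝓝 0) := by
    have t1 : Tendsto (fun χ : ℂ => ((cj χ, (0:ℂ)) : ℂ × ℂ)) (𝓝 0) (𝓝 0) :=
      Continuous.tendsto' (continuous_cj.prodMk continuous_const) 0 0 (by simp [cj_zero])
    have t2 := (hF.continuousAt.tendsto).comp t1
    simpa [hF0, Function.comp_def] using t2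
  have tG : Tendsto (fun χ : ℂ => G (cj χ) 0) (𝓝 0) (𝓝 0) := by
    have t1 : Tendsto (fun χ : ℂ => ((cj χ, (0:ℂ)) : ℂ × ℂ)) (𝓝 0) (𝓝 0) :=
      Continuous.tendsto' (continuous_cj.prodMk continuous_const) 0 0 (by simp [cj_zero])
    have t2 := (hG.continuousAt.tendsto).comp t1
    simpa [hG0, Function.comp_def] using t2
  have tcF : Tendsto (fun χ : ℂ => cj (F (cj χ) 0)) (𝓝 0) (𝓝 0) := by
    have := (continuous_cj.tendsto 0).comp tF
    simpa [cj_zero, Function.comp_def] using this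
  have tcG : Tendsto (fun χ : ℂ => cj (G (cj χ) 0)) (𝓝 0) (𝓝 0) := by
    have := (continuous_cj.tendsto 0).comp tG
    simpa [cj_zero, Function.comp_def] using this
  -- the eventual hypotheses on χ
  have E1 : ∀ᶠ χ : ℂ in 𝓝 0, ((0 : ℂ), χ, (0 : ℂ)) ∈ W := by
    have t : Tendsto (fun χ : ℂ => (((0:ℂ), χ, (0:ℂ)) : ℂ × ℂ × ℂ)) (𝓝 0) (𝓝 0) :=
      Continuous.tendsto' (continuous_const.prodMk (continuous_id.prodMk continuous_const))
        0 0 rfl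
    exact t.eventually_mem (hWo.mem_nhds hW0)
  have E2 : ∀ᶠ χ : ℂ in 𝓝 0, ((χ, (0 : ℂ)) : ℂ × ℂ) ∈ U := by
    have t : Tendsto (fun χ : ℂ => ((χ, (0:ℂ)) : ℂ × ℂ)) (𝓝 0) (𝓝 0) :=
      Continuous.tendsto' (continuous_id.prodMk continuous_const) 0 0 rfl
    exact t.eventually_mem (hUo.mem_nhds hU0)
  have E3a : ∀ᶠ χ : ℂ in 𝓝 0, ((cj χ, (0 : ℂ)) : ℂ × ℂ) ∈ DG := by
    have t : Tendsto (fun χ : ℂ => ((cj χ, (0:ℂ)) : ℂ × ℂ)) (𝓝 0) (𝓝 0) :=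
      Continuous.tendsto' (continuous_cj.prodMk continuous_const) 0 0 (by simp [cj_zero])
    exact t.eventually_mem (hDGo.mem_nhds hDG0)
  have E3b : ∀ᶠ χ : ℂ in 𝓝 0, ((cj χ, (0 : ℂ)) : ℂ × ℂ) ∈ DF := by
    have t : Tendsto (fun χ : ℂ => ((cj χ, (0:ℂ)) : ℂ × ℂ)) (𝓝 0) (𝓝 0) :=
      Continuous.tendsto' (continuous_cj.prodMk continuous_const) 0 0 (by simp [cj_zero])
    exact t.eventually_mem (hDFo.mem_nhds hDF0)
  have E4 : ∀ᶠ χ : ℂ in 𝓝 0, (((0:ℂ), cj (F (cj χ) 0), (0:ℂ)) : ℂ × ℂ × ℂ) ∈ D := by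
    have t : Tendsto (fun χ : ℂ => (((0:ℂ), cj (F (cj χ) 0), (0:ℂ)) : ℂ × ℂ × ℂ))
        (𝓝 0) (𝓝 0) :=
      tendsto_const_nhds.prodMk_nhds (tcF.prodMk_nhds tendsto_const_nhds)
    exact t.eventually_mem (hDo.mem_nhds hD0)
  have E5 : ∀ᶠ χ : ℂ in 𝓝 0, ((cj (F (cj χ) 0), cj (G (cj χ) 0)) : ℂ × ℂ) ∈ V := by
    have t : Tendsto (fun χ : ℂ => ((cj (F (cj χ) 0), cj (G (cj χ) 0)) : ℂ × ℂ))
        (𝓝 0) (𝓝 0) := tcF.prodMk_nhds tcG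
    exact t.eventually_mem (hVo.mem_nhds hV0)
  -- the main eventual identity
  have main : ∀ᶠ χ : ℂ in 𝓝 0,
      cj (deriv (fun w => G (cj χ) w) 0) =
        pd G 0 1 0 0 - qd Q' 1 0 (cj (F (cj χ) 0)) * pd F 0 1 0 0 := by
    filter_upwards [E1, E2, E3a, E3b, E4, E5] with χ h1 h2 h3a h3b h4 h5
    -- step A : G-bar vanishes on the Segre set
    have hq0 : Q 0 χ 0 = 0 := hU (χ, 0) h2
    have hmap0 : G 0 (Q 0 χ 0) =
        Q' (F 0 (Q 0 χ 0)) (cj (F (cj χ) (cj 0))) (cj (G (cj χ) (cj 0))) := hW _ h1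
    rw [hq0, cj_zero, hG0, hF0] at hmap0
    have hVeq : Q' 0 (cj (F (cj χ) 0)) (cj (G (cj χ) 0)) = cj (G (cj χ) 0) := hV _ h5
    rw [hVeq] at hmap0
    have hg0 : cj (G (cj χ) 0) = 0 := hmap0.symm
    -- derivative along τ of G(0, τ)
    have hdiffG0 : DifferentiableAt ℂ (fun τ : ℂ => G 0 τ) 0 := by
      have h' : DifferentiableAt ℂ (fun τ : ℂ => (((0:ℂ), τ) : ℂ × ℂ)) 0 :=
        (differentiableAt_const _).prodMk differentiableAt_id
      exact (hG.differentiableAt).comp 0 h'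
    have hdiffF0 : DifferentiableAt ℂ (fun τ : ℂ => F 0 τ) 0 := by
      have h' : DifferentiableAt ℂ (fun τ : ℂ => (((0:ℂ), τ) : ℂ × ℂ)) 0 :=
        (differentiableAt_const _).prodMk differentiableAt_id
      exact (hF.differentiableAt).comp 0 h'
    set dG := deriv (fun w => G 0 w) 0 with hdGdef
    set a := deriv (fun w => F 0 w) 0 with hadef
    have haF : HasDerivAt (fun τ : ℂ => F 0 τ) a 0 := hdiffF0.hasDerivAt
    -- derivatives of the bars
    have hdFbar : DifferentiableAt ℂ (fun τ : ℂ => F (cj χ) τ) 0 := by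
      have h' : DifferentiableAt ℂ (fun τ : ℂ => ((cj χ, τ) : ℂ × ℂ)) 0 :=
        (differentiableAt_const _).prodMk differentiableAt_id
      exact (hDF _ h3b).comp 0 h'
    have hdGbar : DifferentiableAt ℂ (fun τ : ℂ => G (cj χ) τ) 0 := by
      have h' : DifferentiableAt ℂ (fun τ : ℂ => ((cj χ, τ) : ℂ × ℂ)) 0 :=
        (differentiableAt_const _).prodMk differentiableAt_id
      exact (hDG _ h3a).comp 0 h'
    set bb := deriv (fun w => F (cj χ) w) 0 with hbbdef
    set c := cj (deriv (fun w => G (cj χ) w) 0) with hcdef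
    have hb : HasDerivAt (fun τ : ℂ => cj (F (cj χ) (cj τ))) (cj bb) 0 := by
      have := hasDerivAt_cj_comp hdFbar.hasDerivAt
      rwa [cj_zero] at this
    have hc : HasDerivAt (fun τ : ℂ => cj (G (cj χ) (cj τ))) c 0 := by
      have := hasDerivAt_cj_comp hdGbar.hasDerivAt
      rwa [cj_zero] at this
    -- inner map and outer derivative
    set χ' := cj (F (cj χ) 0) with hχ'def
    have hInner : HasDerivAt
        (fun τ : ℂ => ((F 0 τ, cj (F (cj χ) (cj τ)), cj (G (cj χ) (cj τ))) : ℂ × ℂ × ℂ))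
        ((a, cj bb, c) : ℂ × ℂ × ℂ) 0 := haF.prodMk (hb.prodMk hc)
    set L' := fderiv ℂ (fun p : ℂ × ℂ × ℂ => Q' p.1 p.2.1 p.2.2) ((0, χ', 0) : ℂ × ℂ × ℂ)
      with hL'def
    have hOuter : HasFDerivAt (fun p : ℂ × ℂ × ℂ => Q' p.1 p.2.1 p.2.2) L'
        ((0, χ', 0) : ℂ × ℂ × ℂ) := (hD _ h4).hasFDerivAt
    have hpt : ((F 0 0, cj (F (cj χ) (cj 0)), cj (G (cj χ) (cj 0))) : ℂ × ℂ × ℂ)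
        = ((0, χ', 0) : ℂ × ℂ × ℂ) := by
      rw [cj_zero, hF0, hg0]
    have hOuter' : HasFDerivAt (fun p : ℂ × ℂ × ℂ => Q' p.1 p.2.1 p.2.2) L'
        ((F 0 0, cj (F (cj χ) (cj 0)), cj (G (cj χ) (cj 0))) : ℂ × ℂ × ℂ) := by
      rw [hpt]; exact hOuter
    have hR : HasDerivAt
        (fun τ : ℂ => Q' (F 0 τ) (cj (F (cj χ) (cj τ))) (cj (G (cj χ) (cj τ))))
        (L' ((a, cj bb, c) : ℂ × ℂ × ℂ)) 0 := by
      have := hOuter'.comp_hasDerivAt 0 hInner; exact this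
    -- the two sides agree near 0
    have hev : ∀ᶠ τ : ℂ in 𝓝 0, (((0:ℂ), χ, τ) : ℂ × ℂ × ℂ) ∈ W ∧ ((χ, τ) : ℂ × ℂ) ∈ U := by
      have t1 : Tendsto (fun τ : ℂ => (((0:ℂ), χ, τ) : ℂ × ℂ × ℂ)) (𝓝 0) (𝓝 (0, χ, 0)) :=
        Continuous.tendsto' (continuous_const.prodMk (continuous_const.prodMk continuous_id))
          0 _ rfl
      have t2 : Tendsto (fun τ : ℂ => ((χ, τ) : ℂ × ℂ)) (𝓝 0) (𝓝 (χ, 0)) :=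
        Continuous.tendsto' (continuous_const.prodMk continuous_id) 0 _ rfl
      exact (t1.eventually_mem (hWo.mem_nhds h1)).and (t2.eventually_mem (hUo.mem_nhds h2))
    have heq : (fun τ : ℂ => G 0 τ) =ᶠ[𝓝 0]
        (fun τ : ℂ => Q' (F 0 τ) (cj (F (cj χ) (cj τ))) (cj (G (cj χ) (cj τ)))) := by
      filter_upwards [hev] with τ hτ
      obtain ⟨hτW, hτU⟩ := hτ
      have hqτ : Q 0 χ τ = τ := hU _ hτU
      have hmτ : G 0 (Q 0 χ τ) =
          Q' (F 0 (Q 0 χ τ)) (cj (F (cj χ) (cj τ))) (cj (G (cj χ) (cj τ))) := hW _ hτW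
      rw [hqτ] at hmτ
      exact hmτ
    have hLd : HasDerivAt (fun τ : ℂ => G 0 τ) (L' ((a, cj bb, c) : ℂ × ℂ × ℂ)) 0 :=
      hR.congr_of_eventuallyEq heq
    have huniq : dG = L' ((a, cj bb, c) : ℂ × ℂ × ℂ) := hdiffG0.hasDerivAt.unique hLd
    -- compute the partials of Q' at (0, χ', 0)
    have hz : HasDerivAt (fun z : ℂ => Q' z χ' 0) (L' ((1, 0, 0) : ℂ × ℂ × ℂ)) 0 := by
      have hin : HasDerivAt (fun z : ℂ => ((z, χ', (0:ℂ)) : ℂ × ℂ × ℂ))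
          (((1 : ℂ), (0:ℂ), (0:ℂ)) : ℂ × ℂ × ℂ) 0 :=
        (hasDerivAt_id 0).prodMk
          ((hasDerivAt_const 0 χ').prodMk (hasDerivAt_const 0 (0:ℂ)))
      exact hOuter.comp_hasDerivAt 0 hin
    have hqdval : qd Q' 1 0 χ' = L' ((1, 0, 0) : ℂ × ℂ × ℂ) := by
      rw [qd10]; exact hz.deriv
    -- partial in χ' : zero
    have h5' : ((χ', (0:ℂ)) : ℂ × ℂ) ∈ V := by
      have := h5; rwa [hg0] at this
    have hχ1 : HasDerivAt (fun y : ℂ => Q' 0 y 0) (L' ((0, 1, 0) : ℂ × ℂ × ℂ)) χ' := by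
      have hin : HasDerivAt (fun y : ℂ => (((0:ℂ), y, (0:ℂ)) : ℂ × ℂ × ℂ))
          (((0:ℂ), (1:ℂ), (0:ℂ)) : ℂ × ℂ × ℂ) χ' :=
        (hasDerivAt_const χ' (0:ℂ)).prodMk
          ((hasDerivAt_id χ').prodMk (hasDerivAt_const χ' (0:ℂ)))
      exact hOuter.comp_hasDerivAt χ' hin
    have hev2 : (fun y : ℂ => Q' 0 y 0) =ᶠ[𝓝 χ'] (fun _ => (0:ℂ)) := by
      have t : Tendsto (fun y : ℂ => ((y, (0:ℂ)) : ℂ × ℂ)) (𝓝 χ') (𝓝 (χ', 0)) :=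
        Continuous.tendsto' (continuous_id.prodMk continuous_const) χ' _ rfl
      filter_upwards [t.eventually_mem (hVo.mem_nhds h5')] with y hy
      exact hV _ hy
    have hχ2 : HasDerivAt (fun y : ℂ => Q' 0 y 0) 0 χ' :=
      (hasDerivAt_const χ' (0:ℂ)).congr_of_eventuallyEq hev2
    have h010 : L' ((0, 1, 0) : ℂ × ℂ × ℂ) = 0 := hχ1.unique hχ2
    -- partial in τ' : one
    have hτ1 : HasDerivAt (fun t : ℂ => Q' 0 χ' t) (L' ((0, 0, 1) : ℂ × ℂ × ℂ)) 0 := by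
      have hin : HasDerivAt (fun t : ℂ => (((0:ℂ), χ', t) : ℂ × ℂ × ℂ))
          (((0:ℂ), (0:ℂ), (1:ℂ)) : ℂ × ℂ × ℂ) 0 :=
        (hasDerivAt_const 0 (0:ℂ)).prodMk
          ((hasDerivAt_const 0 χ').prodMk (hasDerivAt_id 0))
      exact hOuter.comp_hasDerivAt 0 hin
    have hev3 : (fun t : ℂ => Q' 0 χ' t) =ᶠ[𝓝 0] (fun t => t) := by
      have t : Tendsto (fun t : ℂ => ((χ', t) : ℂ × ℂ)) (𝓝 0) (𝓝 (χ', 0)) :=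
        Continuous.tendsto' (continuous_const.prodMk continuous_id) 0 _ rfl
      filter_upwards [t.eventually_mem (hVo.mem_nhds h5')] with y hy
      exact hV _ hy
    have hτ2 : HasDerivAt (fun t : ℂ => Q' 0 χ' t) 1 0 :=
      (hasDerivAt_id 0).congr_of_eventuallyEq hev3
    have h001 : L' ((0, 0, 1) : ℂ × ℂ × ℂ) = 1 := hτ1.unique hτ2
    -- linear decomposition
    have hdecomp : ((a, cj bb, c) : ℂ × ℂ × ℂ) =
        a • ((1, 0, 0) : ℂ × ℂ × ℂ) + (cj bb) • ((0, 1, 0) : ℂ × ℂ × ℂ)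
        + c • ((0, 0, 1) : ℂ × ℂ × ℂ) := by
      simp [Prod.ext_iff]
    have hlin : L' ((a, cj bb, c) : ℂ × ℂ × ℂ) =
        a * L' ((1, 0, 0) : ℂ × ℂ × ℂ) + (cj bb) * L' ((0, 1, 0) : ℂ × ℂ × ℂ)
        + c * L' ((0, 0, 1) : ℂ × ℂ × ℂ) := by
      rw [hdecomp, map_add, map_add, L'.map_smul, L'.map_smul, L'.map_smul]
      simp [smul_eq_mul]
    rw [h010, h001, ← hqdval] at hlin
    have hkey : dG = a * qd Q' 1 0 χ' + c := by
      rw [huniq, hlin]; ring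
    -- conclude
    rw [pd01, pd01, ← hdGdef, ← hadef]
    rw [hkey]; ring
  refine ⟨main, ?_⟩
  have h0 := main.self_of_nhds
  rw [cj_zero, hF0, cj_zero] at h0
  have hq10 : qd Q' 1 0 0 = 0 := by
    have hevz : (fun z : ℂ => Q' z 0 0) =ᶠ[𝓝 0] (fun _ => (0:ℂ)) := by
      have t : Tendsto (fun z : ℂ => ((z, (0:ℂ)) : ℂ × ℂ)) (𝓝 0) (𝓝 0) :=
        Continuous.tendsto' (continuous_id.prodMk continuous_const) 0 0 rfl
      filter_upwards [t.eventually hn1'] with z hz using hz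
    rw [qd10, hevz.deriv_eq, deriv_const]
  rw [hq10, zero_mul, sub_zero, ← pd01] at h0
  exact Complex.conj_eq_iff_im.1 h0
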